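/- Let G be a topological group with topology σ acting by automorphisms on a group H, and equip the semidirect product H ⋊ G with the finest group topology T under which the filter of neighbourhoods of the identity in the topology D × σ (D the discrete topology on H) converges to the identity. Then the subspace topology induced by T on the subgroup {e} × G equals σ. -/

import Mathlib

open TopologicalSpace Topology Filter

/-- With `T` the finest group topology on `H ⋊[φ] G` in which the neighbourhood filter of the
identity in the topology `D × σ` (discrete on `H`) converges to the identity, the topology
induced by `T` on the subgroup `{e} × G` is the original topology `σ` of `G`. -/
theorem induced_topology_on_G_eq_sigma {H G : Type*} [Group H] [Group G]
    [σ : TopologicalSpace G] [IsTopologicalGroup G] (φ : G →* MulAut H)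
    (T : TopologicalSpace (H ⋊[φ] G)) (hT : @IsTopologicalGroup (H ⋊[φ] G) T _)
    (hconv :
      @nhds (H ⋊[φ] G)
        (TopologicalSpace.induced (fun p : H ⋊[φ] G => (p.left, p.right))
          (@instTopologicalSpaceProd H G ⊥ σ)) 1 ≤ @nhds (H ⋊[φ] G) T 1)
    (hfinest : ∀ T' : TopologicalSpace (H ⋊[φ] G), @IsTopologicalGroup (H ⋊[φ] G) T' _ →
      @nhds (H ⋊[φ] G)
        (TopologicalSpace.induced (fun p : H ⋊[φ] G => (p.left, p.right))
          (@instTopologicalSpaceProd H G ⊥ σ)) 1 ≤ @nhds (H ⋊[φ] G) T' 1 → T ≤ T') :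
    TopologicalSpace.induced (⇑(SemidirectProduct.inr : G →* H ⋊[φ] G)) T = σ := by
  set f : H ⋊[φ] G → H × G := fun p => (p.left, p.right) with hf
  set T₀ : TopologicalSpace (H ⋊[φ] G) :=
    TopologicalSpace.induced f (@instTopologicalSpaceProd H G ⊥ σ) with hT₀
  set π := (SemidirectProduct.rightHom : H ⋊[φ] G →* G) with hπ
  letI T₁ : TopologicalSpace (H ⋊[φ] G) := TopologicalSpace.induced π σ
  have hT₁grp : @IsTopologicalGroup (H ⋊[φ] G) T₁ _ := topologicalGroup_induced π
  -- T₀ is finer than T₁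
  have hT₀T₁ : T₀ ≤ T₁ := by
    have : (TopologicalSpace.induced π σ : TopologicalSpace (H ⋊[φ] G)) =
        TopologicalSpace.induced f (TopologicalSpace.induced Prod.snd σ) := by
      rw [induced_compose]
      rfl
    show T₀ ≤ TopologicalSpace.induced π σ
    rw [this]
    exact induced_mono inf_le_right
  have hle : T ≤ T₁ := by
    refine hfinest T₁ hT₁grp ?_
    exact nhds_mono hT₀T₁
  refine le_antisymm ?_ ?_
  · -- induced inr T ≤ σ
    calc TopologicalSpace.induced (⇑(SemidirectProduct.inr : G →* H ⋊[φ] G)) T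
        ≤ TopologicalSpace.induced (⇑(SemidirectProduct.inr : G →* H ⋊[φ] G)) T₁ :=
          induced_mono hle
      _ = σ := by
          show TopologicalSpace.induced _ (TopologicalSpace.induced π σ) = σ
          rw [induced_compose]
          have : (⇑π ∘ ⇑(SemidirectProduct.inr : G →* H ⋊[φ] G)) = id := by
            funext g; simp [hπ]
          rw [this, induced_id]
  · -- σ ≤ induced inr T, i.e. inr is continuous
    letI := T
    haveI := hT
    have hcont : Continuous (⇑(SemidirectProduct.inr : G →* H ⋊[φ] G)) := by
      refine continuous_of_continuousAt_one (SemidirectProduct.inr : G →* H ⋊[φ] G) ?_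
      show Filter.Tendsto _ (𝓝 1) (@nhds _ T _)
      rw [map_one]
      refine Filter.Tendsto.mono_right ?_ hconv
      rw [hT₀, @nhds_induced (H × G) (H ⋊[φ] G) (@instTopologicalSpaceProd H G ⊥ σ) f 1]
      rw [Filter.tendsto_comap_iff]
      have heq : (f ∘ ⇑(SemidirectProduct.inr : G →* H ⋊[φ] G)) = fun g : G => ((1 : H), g) := by
        funext g; simp [hf]
      rw [heq]
      have h1 : f (1 : H ⋊[φ] G) = ((1 : H), (1 : G)) := rfl
      rw [h1, @nhds_prod_eq H G ⊥ σ 1 1]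
      exact Filter.Tendsto.prodMk (by letI : TopologicalSpace H := ⊥; exact tendsto_const_nhds) Filter.tendsto_id
    exact continuous_iff_le_induced.mp hcont
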